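/- Suppose S is a biorder and a is a configuration for S for which there exist s, t ∈ S with s ⋗ t, t ▷ s, Γ(s) = Γ(t) and a(s) < a(t). Then there exist s, t, r ∈ S such that s ≫ t, t ⋗ r, r ⋗ s, Γ(s) = Γ(t) and a(s) < a(t). -/

import Mathlib

/-!  Biorders and configurations (Section 4 of the paper).

A biorder is a finite set `S` with two linear orders `>_i`, `>_j` and a labelling
`Γ : S → {i, j}` (here modelled by `Bool`, with `true` standing for the label `i` and
`false` for the label `j`), such that `s >_i t` and `t >_j s` force `Γ s = j` and `Γ t = i`.

A configuration is a function `a : S → ℕ` taking values in `{0, 1, 2}`.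

All signature-related notions are defined relative to a finite subset `T ⊆ S`
(the biorder restricted to `T`); the notions for the biorder `S` itself are recovered
by taking `T = Finset.univ`. -/

attribute [local instance] Classical.propDecidable

namespace BiorderCrystal

structure Biorder (S : Type) where
  /-- the linear order whose strict relation is `<_i` -/
  li : LinearOrder S
  /-- the linear order whose strict relation is `<_j` -/
  lj : LinearOrder S
  /-- the labelling `Γ : S → {i, j}`; `true` means label `i`, `false` means label `j` -/
  lab : S → Bool
  /-- if `s >_i t` and `t >_j s` then `Γ s = j` and `Γ t = i` -/
  compat : ∀ s t : S, li.lt t s → lj.lt s t → lab s = false ∧ lab t = true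

variable {S : Type}

/-- `s <_i t`. -/
def Biorder.lti (B : Biorder S) (s t : S) : Prop := B.li.lt s t

/-- `s <_j t`. -/
def Biorder.ltj (B : Biorder S) (s t : S) : Prop := B.lj.lt s t

/-- The order used for the `h`-signature: `>_i` if `h = true`, `>_j` if `h = false`. -/
def Biorder.ord (B : Biorder S) (h : Bool) : LinearOrder S := if h then B.li else B.lj

/-- `s ≫ t`, i.e. `s >_i t` and `s >_j t`. -/
def Biorder.gg (B : Biorder S) (s t : S) : Prop := B.lti t s ∧ B.ltj t s

/-- `s ⋗ t`, i.e. `s >_i t` or `s >_j t`. -/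
def Biorder.gd (B : Biorder S) (s t : S) : Prop := B.lti t s ∨ B.ltj t s

/-- `▷`, the transitive closure of `⋗`, computed within the subset `T`. -/
def Biorder.triOn (B : Biorder S) (T : Finset S) : S → S → Prop :=
  Relation.TransGen (fun s t => s ∈ T ∧ t ∈ T ∧ B.gd s t)

/-- The sign `π_h(a, s) ∈ {+1, 0, -1}` contributed by `s` to the `h`-signature of `a`. -/
def sgn (B : Biorder S) (h : Bool) (a : S → ℕ) (s : S) : ℤ :=
  if (a s = 0 ∧ B.lab s = h) ∨ (a s = 1 ∧ B.lab s ≠ h) then 1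
  else if (a s = 1 ∧ B.lab s = h) ∨ (a s = 2 ∧ B.lab s ≠ h) then -1
  else 0

variable [Fintype S]

/-- Minus the partial sum of the `h`-signature of `a` (over `T`) along the positions
up to and including that of `s`: the elements of `T` which are `≥ s` in the order `ord h`. -/
noncomputable def G (B : Biorder S) (h : Bool) (T : Finset S) (a : S → ℕ) (s : S) : ℤ :=
  -(∑ t ∈ T.filter (fun t => (B.ord h).le s t), sgn B h a t)

/-- The sum of the `h`-signature of `a` (over `T`) from the position of `s` onwards:
the elements of `T` which are `≤ s` in the order `ord h`. -/
noncomputable def H (B : Biorder S) (h : Bool) (T : Finset S) (a : S → ℕ) (s : S) : ℤ :=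
  ∑ t ∈ T.filter (fun t => (B.ord h).le t s), sgn B h a t

/-- `ε_h(a)` (over `T`): the maximum of `0` and all the partial sums `G`. -/
noncomputable def epsB (B : Biorder S) (h : Bool) (T : Finset S) (a : S → ℕ) : ℤ :=
  T.fold max 0 (G B h T a)

/-- `φ_h(a)` (over `T`): the maximum of `0` and all the partial sums `H`. -/
noncomputable def phiB (B : Biorder S) (h : Bool) (T : Finset S) (a : S → ℕ) : ℤ :=
  T.fold max 0 (H B h T a)

/-- The `h`-good element of `T` for `a`:  the element in the good position of the
`h`-signature, i.e. the `ord h`-greatest element achieving `G = ε_h > 0` (or `none`). -/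
noncomputable def goodElt (B : Biorder S) (h : Bool) (T : Finset S) (a : S → ℕ) : Option S :=
  if hne : (T.filter fun s => 0 < epsB B h T a ∧ G B h T a s = epsB B h T a).Nonempty
  then some (@Finset.max' S (B.ord h) _ hne)
  else none

/-- The `h`-cogood element of `T` for `a`: the element in the cogood position of the
`h`-signature, i.e. the `ord h`-least element achieving `H = φ_h > 0` (or `none`). -/
noncomputable def cogoodElt (B : Biorder S) (h : Bool) (T : Finset S) (a : S → ℕ) : Option S :=
  if hne : (T.filter fun s => 0 < phiB B h T a ∧ H B h T a s = phiB B h T a).Nonempty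
  then some (@Finset.min' S (B.ord h) _ hne)
  else none

/-- The crystal operator `ẽ_h` (over `T`): decrease `a` by one at the `h`-good element,
or `none` (the ghost element `0`) if there is no good position. -/
noncomputable def et (B : Biorder S) (h : Bool) (T : Finset S) (a : S → ℕ) :
    Option (S → ℕ) :=
  (goodElt B h T a).map fun s => Function.update a s (a s - 1)

/-- The crystal operator `f̃_h` (over `T`): increase `a` by one at the `h`-cogood element,
or `none` (the ghost element `0`) if there is no cogood position. -/
noncomputable def ft (B : Biorder S) (h : Bool) (T : Finset S) (a : S → ℕ) :
    Option (S → ℕ) :=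
  (cogoodElt B h T a).map fun s => Function.update a s (a s + 1)

/-- `a` is a good configuration for the biorder restricted to `T`:
axioms G1, G2, G3 of the paper. -/
def IsGoodOn (B : Biorder S) (T : Finset S) (a : S → ℕ) : Prop :=
  (¬ ∃ s ∈ T, ∃ t ∈ T, B.lti t s ∧ B.ltj s t ∧ a s = 1 ∧ a t = 1) ∧
  (¬ ∃ s ∈ T, ∃ t ∈ T, B.gd s t ∧ B.triOn T t s ∧ B.lab s = B.lab t ∧ a s < a t) ∧
  (¬ ∃ q ∈ T, ∃ r ∈ T, ∃ s ∈ T, ∃ t ∈ T,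
      B.gd q r ∧ B.gg r s ∧ B.gd s t ∧ B.gg r t ∧ B.gd t q ∧ B.gg q s ∧
      a q = 2 ∧ a s = 2 ∧ a r = 0 ∧ a t = 0)


/-! ### Auxiliary lemmas for Lemma 4.7 -/

section Aux

variable {S : Type}

private lemma LO.trich (L : LinearOrder S) (a b : S) : L.lt a b ∨ a = b ∨ L.lt b a := by
  letI := L; exact lt_trichotomy a b

private lemma LO.trans (L : LinearOrder S) {a b c : S} (h1 : L.lt a b) (h2 : L.lt b c) :
    L.lt a c := by
  letI := L; exact lt_trans h1 h2

private lemma LO.asymm (L : LinearOrder S) {a b : S} (h1 : L.lt a b) (h2 : L.lt b a) :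
    False := by
  letI := L; exact absurd h2 (lt_asymm h1)

private lemma LO.irrefl (L : LinearOrder S) {a : S} (h : L.lt a a) : False := by
  letI := L; exact lt_irrefl a h

private lemma LO.not_lt_of_le (L : LinearOrder S) {a b : S} (h : L.le a b) (h2 : L.lt b a) :
    False := by
  letI := L; exact absurd h2 (not_lt.mpr h)

/-- The biorder with the two orders swapped and the labels flipped. -/
private def Biorder.swap (B : Biorder S) : Biorder S where
  li := B.lj
  lj := B.li
  lab s := !B.lab s
  compat s t h1 h2 := by
    have h := B.compat t s h2 h1
    simp [h.1, h.2]

private lemma swap_gd (B : Biorder S) {s t : S} : B.swap.gd s t ↔ B.gd s t := by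
  unfold Biorder.gd Biorder.lti Biorder.ltj Biorder.swap
  exact Or.comm

/-- If `s ⋗ t` and the labels agree, then `s ≫ t`. -/
private lemma gg_of_gd_lab (B : Biorder S) {s t : S} (h : B.gd s t)
    (hl : B.lab s = B.lab t) : B.gg s t := by
  rcases h with hi | hj
  · refine ⟨hi, ?_⟩
    rcases LO.trich B.lj t s with h' | h' | h'
    · exact h'
    · exact (LO.irrefl B.li (h' ▸ hi)).elim
    · have hc := B.compat s t hi h'
      rw [hl, hc.2] at hc
      exact absurd hc.1 (by simp)
  · refine ⟨?_, hj⟩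
    rcases LO.trich B.li t s with h' | h' | h'
    · exact h'
    · exact (LO.irrefl B.lj (h' ▸ hj)).elim
    · have hc := B.compat t s h' hj
      rw [← hl, hc.2] at hc
      exact absurd hc.1 (by simp)

/-- The key lemma, case `Γ s = Γ t = i`: if `s ≫ t`, `t ▷ s` and there is no `r` with
`t ⋗ r ⋗ s`, then there is an `x` with `s ≫ x ≫ t` and `Γ x = i`. -/
private lemma key_true [Fintype S] (B : Biorder S) (s t : S)
    (hst_i : B.lti t s) (hst_j : B.ltj t s)
    (htri : Relation.TransGen B.gd t s)
    (hs : B.lab s = true) (ht : B.lab t = true)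
    (hnr : ∀ r, B.gd t r → B.gd r s → False) :
    ∃ x, B.gg s x ∧ B.gg x t ∧ B.lab x = true := by
  classical
  set A : Finset S := Finset.univ.filter (fun y => B.ltj t y) with hA
  have hsA : s ∈ A := by simp [hA, hst_j]
  have hAne : A.Nonempty := ⟨s, hsA⟩
  set x := @Finset.min' S B.li A hAne with hxdef
  have hxA : x ∈ A := @Finset.min'_mem S B.li A hAne
  have hxj : B.ltj t x := by simpa [hA] using hxA
  have hmin : ∀ y, B.ltj t y → B.lti y x → False := by
    intro y hy hlt
    have hle : B.li.le x y := @Finset.min'_le S B.li A y (by simp [hA, hy])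
    exact LO.not_lt_of_le B.li hle hlt
  -- Step 1 : x <_i s
  have hxs_i : B.lti x s := by
    rcases LO.trich B.li x s with h | h | h
    · exact h
    · -- x = s : the chain can never reach s
      exfalso
      rw [h] at hmin
      have hinv : ∀ z, Relation.TransGen B.gd t z → B.lti z s ∧ ¬ B.ltj t z := by
        intro z hz
        induction hz with
        | @single z h0 =>
          rcases h0 with hi | hj
          · exact ⟨LO.trans B.li hi hst_i,
              fun hc => hmin _ hc (LO.trans B.li hi hst_i)⟩
          · have hzi : B.lti z s := by
              rcases LO.trich B.li z s with h' | h' | h'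
              · exact h'
              · exact (LO.asymm B.lj (h' ▸ hj) hst_j).elim
              · exact (hnr _ (Or.inr hj) (Or.inl h')).elim
            exact ⟨hzi, fun hc => LO.asymm B.lj hj hc⟩
        | @tail y z hz1 h0 ih =>
          obtain ⟨hyi, hynj⟩ := ih
          rcases h0 with hi | hj
          · exact ⟨LO.trans B.li hi hyi,
              fun hc => hmin _ hc (LO.trans B.li hi hyi)⟩
          · have hzt : B.ltj z t := by
              rcases LO.trich B.lj y t with h' | h' | h'
              · exact LO.trans B.lj hj h'
              · exact h' ▸ hj
              · exact (hynj h').elim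
            have hzi : B.lti z s := by
              rcases LO.trich B.li z s with h' | h' | h'
              · exact h'
              · exact (LO.asymm B.lj (h' ▸ hzt) hst_j).elim
              · exact (hnr _ (Or.inr hzt) (Or.inl h')).elim
            exact ⟨hzi, fun hc => LO.asymm B.lj hzt hc⟩
      exact LO.irrefl B.li (hinv s htri).1
    · exact (hmin s hst_j h).elim
  -- Step 2 : t <_i x
  have hxt_i : B.lti t x := by
    rcases LO.trich B.li t x with h | h | h
    · exact h
    · exact (LO.irrefl B.lj (h ▸ hxj)).elim
    · have hc := B.compat t x h hxj
      rw [hc.1] at ht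
      exact absurd ht (by simp)
  -- Step 3 : x <_j s
  have hxs_j : B.ltj x s := by
    rcases LO.trich B.lj x s with h | h | h
    · exact h
    · exact (LO.irrefl B.li (h ▸ hxs_i)).elim
    · have hc := B.compat s x hxs_i h
      rw [hc.1] at hs
      exact absurd hs (by simp)
  -- Step 4 : Γ x = i
  have hlabx : B.lab x = true := by
    rcases Bool.eq_false_or_eq_true (B.lab x) with htt | hf
    · exact htt
    exfalso
    -- x is not forced true, hence everything j-below x is i-below x
    have hdag : ∀ z, B.ltj z x → B.lti z x := by
      intro z hz
      rcases LO.trich B.li z x with h | h | h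
      · exact h
      · exact (LO.irrefl B.lj (h ▸ hz)).elim
      · have hc := B.compat z x h hz
        rw [hc.2] at hf
        exact absurd hf (by simp)
    have hinv : ∀ z, Relation.TransGen B.gd t z → B.ltj z x := by
      intro z hz
      induction hz with
      | @single z h0 =>
        rcases h0 with hi | hj
        · have hzi : B.lti z x := LO.trans B.li hi hxt_i
          rcases LO.trich B.lj z x with h' | h' | h'
          · exact h'
          · exact (LO.irrefl B.li (h' ▸ hzi)).elim
          · exact (hmin _ (LO.trans B.lj hxj h') hzi).elim
        · exact LO.trans B.lj hj hxj
      | @tail y z hz1 h0 ih =>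
        rcases h0 with hi | hj
        · have hzi : B.lti z x := LO.trans B.li hi (hdag _ ih)
          rcases LO.trich B.lj z x with h' | h' | h'
          · exact h'
          · exact (LO.irrefl B.li (h' ▸ hzi)).elim
          · exact (hmin _ (LO.trans B.lj hxj h') hzi).elim
        · exact LO.trans B.lj hj ih
    exact LO.asymm B.lj (hinv s htri) hxs_j
  exact ⟨x, ⟨hxs_i, hxs_j⟩, ⟨hxt_i, hxj⟩, hlabx⟩

/-- The key lemma: under the hypotheses, there is an `x` with `s ≫ x ≫ t` and
`Γ x = Γ s`. -/
private lemma key [Fintype S] (B : Biorder S) (s t : S)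
    (hgg : B.gg s t) (htri : Relation.TransGen B.gd t s)
    (hlab : B.lab s = B.lab t)
    (hnr : ∀ r, B.gd t r → B.gd r s → False) :
    ∃ x, B.gg s x ∧ B.gg x t ∧ B.lab x = B.lab s := by
  classical
  rcases Bool.eq_false_or_eq_true (B.lab s) with htt | hf
  case inl =>
    obtain ⟨x, h1, h2, h3⟩ :=
      key_true B s t hgg.1 hgg.2 htri htt (hlab ▸ htt) hnr
    exact ⟨x, h1, h2, h3.trans htt.symm⟩
  · -- apply key_true to the swapped biorder
    have htri' : Relation.TransGen B.swap.gd t s :=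
      Relation.TransGen.mono (fun a b h => (swap_gd B).mpr h) t s htri
    obtain ⟨x, h1, h2, h3⟩ :=
      key_true B.swap s t hgg.2 hgg.1 htri'
        (by simp [Biorder.swap, hf]) (by simp [Biorder.swap, hlab ▸ hf])
        (fun r h1 h2 => hnr r ((swap_gd B).mp h1) ((swap_gd B).mp h2))
    refine ⟨x, ⟨h1.2, h1.1⟩, ⟨h2.2, h2.1⟩, ?_⟩
    have : (!B.lab x) = true := h3
    rw [hf]
    simpa using this

end Aux

/-- Lemma 4.7 of the paper: a violation of axiom G2 can be chosen in triangle form: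
there are `s, t, r` with `s ≫ t ⋗ r ⋗ s`, `Γ(s) = Γ(t)` and `a(s) < a(t)`. -/
theorem good_axiom_G2_triangle (S : Type) [Fintype S] (B : Biorder S)
    (a : S → ℕ) (ha : ∀ s, a s ≤ 2)
    (hex : ∃ s t : S, B.gd s t ∧ B.triOn Finset.univ t s ∧ B.lab s = B.lab t ∧ a s < a t) :
    ∃ s t r : S, B.gg s t ∧ B.gd t r ∧ B.gd r s ∧ B.lab s = B.lab t ∧ a s < a t := by
  classical
  obtain ⟨s0, t0, hgd0, htri0, hlab0, hlt0⟩ := hex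
  have htri0' : Relation.TransGen B.gd t0 s0 :=
    Relation.TransGen.mono
      (fun a b (h : a ∈ Finset.univ ∧ b ∈ Finset.univ ∧ B.gd a b) => h.2.2) t0 s0 htri0
  suffices H : ∀ n, ∀ s t : S,
      (Finset.univ.filter fun y => B.lti t y ∧ B.lti y s).card ≤ n →
      B.gg s t → Relation.TransGen B.gd t s → B.lab s = B.lab t → a s < a t →
      ∃ s t r : S, B.gg s t ∧ B.gd t r ∧ B.gd r s ∧ B.lab s = B.lab t ∧ a s < a t by
    exact H _ s0 t0 le_rfl (gg_of_gd_lab B hgd0 hlab0) htri0' hlab0 hlt0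
  intro n
  induction n using Nat.strong_induction_on with
  | _ n ih =>
    intro s t hcard hgg htri hlab hlt
    by_cases hr : ∃ r, B.gd t r ∧ B.gd r s
    · obtain ⟨r, h1, h2⟩ := hr
      exact ⟨s, t, r, hgg, h1, h2, hlab, hlt⟩
    · push_neg at hr
      obtain ⟨x, hsx, hxt, hlx⟩ := key B s t hgg htri hlab (fun r h1 h2 => hr r h1 h2)
      have hxmem : x ∈ (Finset.univ.filter fun y => B.lti t y ∧ B.lti y s) := by
        simp [hxt.1, hsx.1]
      have hsub1 : (Finset.univ.filter fun y => B.lti x y ∧ B.lti y s) ⊂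
          (Finset.univ.filter fun y => B.lti t y ∧ B.lti y s) := by
        refine Finset.ssubset_iff_of_subset ?_ |>.mpr ⟨x, hxmem, ?_⟩
        · intro y hy
          simp only [Finset.mem_filter, Finset.mem_univ, true_and] at hy ⊢
          exact ⟨LO.trans B.li hxt.1 hy.1, hy.2⟩
        · simp only [Finset.mem_filter, Finset.mem_univ, true_and, not_and]
          exact fun hh => absurd hh (fun hh => LO.irrefl B.li hh)
      have hsub2 : (Finset.univ.filter fun y => B.lti t y ∧ B.lti y x) ⊂
          (Finset.univ.filter fun y => B.lti t y ∧ B.lti y s) := by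
        refine Finset.ssubset_iff_of_subset ?_ |>.mpr ⟨x, hxmem, ?_⟩
        · intro y hy
          simp only [Finset.mem_filter, Finset.mem_univ, true_and] at hy ⊢
          exact ⟨hy.1, LO.trans B.li hy.2 hsx.1⟩
        · simp only [Finset.mem_filter, Finset.mem_univ, true_and, not_and]
          exact fun _ hh => LO.irrefl B.li hh
      rcases Nat.lt_or_ge (a s) (a x) with h | h
      · have htri' : Relation.TransGen B.gd x s :=
          Relation.TransGen.head (Or.inl hxt.1) htri
        exact ih _ (lt_of_lt_of_le (Finset.card_lt_card hsub1) hcard) s x le_rfl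
          hsx htri' hlx.symm h
      · have hxtlt : a x < a t := lt_of_le_of_lt h hlt
        have htri' : Relation.TransGen B.gd t x :=
          Relation.TransGen.tail htri (Or.inl hsx.1)
        exact ih _ (lt_of_lt_of_le (Finset.card_lt_card hsub2) hcard) x t le_rfl
          hxt htri' (hlx.trans hlab) hxtlt

end BiorderCrystal
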